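/- Let V be a finite-dimensional complex vector space with a nondegenerate symmetric bilinear form and φ a skew-symmetric endomorphism. Then the restriction of the form to L_0 = Ker(φ^{dim V}) is nondegenerate. -/

import Mathlib

open Module

private lemma skew_pow_aux
    {V : Type*} [AddCommGroup V] [Module ℂ V]
    (B : LinearMap.BilinForm ℂ V)
    (φ : Module.End ℂ V) (hskew : ∀ x y, B (φ x) y + B x (φ y) = 0) :
    ∀ (k : ℕ) (x y : V), B x (φ ^ k <| y) = (-1 : ℂ) ^ k * B (φ ^ k <| x) y := by
  intro k
  induction k with
  | zero => simp
  | succ n ih =>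
    intro x y
    have h1 : (φ ^ (n + 1)) y = (φ ^ n) (φ y) := by
      rw [pow_succ]; rfl
    have h2 : (φ ^ (n + 1)) x = φ ((φ ^ n) x) := by
      rw [pow_succ']; rfl
    rw [h1, ih x (φ y), h2]
    have := hskew ((φ ^ n) x) y
    have hBx : B ((φ ^ n) x) (φ y) = -B (φ ((φ ^ n) x)) y :=
      eq_neg_of_add_eq_zero_right this
    rw [hBx]
    ring

/-- For a skew-symmetric endomorphism of a finite-dimensional complex vector
space with a nondegenerate symmetric bilinear form, the restriction of the form to the
generalized eigenspace `L_0 = Ker (φ ^ dim V)` is nondegenerate. -/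
theorem restrict_nondegenerate_on_L0
    (V : Type*) [AddCommGroup V] [Module ℂ V] [FiniteDimensional ℂ V]
    (B : LinearMap.BilinForm ℂ V) (hBnd : B.Nondegenerate) (hBsymm : ∀ x y, B x y = B y x)
    (φ : Module.End ℂ V) (hskew : ∀ x y, B (φ x) y + B x (φ y) = 0) :
    (B.restrict (LinearMap.ker (φ ^ (Module.finrank ℂ V)))).Nondegenerate := by
  set n := Module.finrank ℂ V with hn
  set K : Submodule ℂ V := LinearMap.ker (φ ^ n) with hK
  -- K equals the maximal generalized eigenspace for 0
  have hK0 : K = φ.maxGenEigenspace 0 := by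
    have h1 : φ.genEigenspace 0 (n : ℕ∞) = K := by
      rw [Module.End.genEigenspace_nat]
      simp [hK]
    rw [← h1]
    apply le_antisymm
    · exact (φ.genEigenspace 0).monotone le_top
    · rw [Module.End.maxGenEigenspace]
      exact φ.genEigenspace_le_genEigenspace_finrank 0 ⊤
  suffices hL : (B.restrict K).SeparatingLeft by
    refine ⟨hL, fun y hy => hL y fun x => ?_⟩
    have := hy x
    rw [LinearMap.BilinForm.restrict_apply, LinearMap.domRestrict_apply] at this ⊢
    rw [hBsymm]
    exact this
  intro x hx
  apply Subtype.ext
  show (x : V) = 0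
  apply hBnd.1
  -- suffices to show B x y = 0 for all y in each maxGenEigenspace
  have htop : ⨆ (μ : ℂ), φ.maxGenEigenspace μ = ⊤ := φ.iSup_maxGenEigenspace_eq_top
  intro y
  have hy : y ∈ ⨆ (μ : ℂ), φ.maxGenEigenspace μ := htop ▸ Submodule.mem_top
  induction hy using Submodule.iSup_induction' with
  | mem μ y hyμ =>
    by_cases hμ : μ = 0
    · -- y ∈ K, use hypothesis hx
      have hyK : y ∈ K := by rw [hK0, ← hμ]; exact hyμ
      have := hx ⟨y, hyK⟩
      simpa [LinearMap.BilinForm.restrict_apply] using this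
    · -- μ ≠ 0 : φ restricted to W := maxGenEigenspace μ is bijective
      set W := φ.maxGenEigenspace μ with hW
      have hmaps : Set.MapsTo φ W W :=
        Module.End.mapsTo_maxGenEigenspace_of_comm (Commute.refl φ) μ
      set ψ : Module.End ℂ W := φ.restrict hmaps with hψ
      have hinj : Function.Injective ψ := by
        rw [← LinearMap.ker_eq_bot]
        rw [Submodule.eq_bot_iff]
        rintro ⟨w, hw⟩ hwker
        have hφw : φ w = 0 := by
          have := congrArg (Subtype.val) hwker
          exact this
        have hw0 : w ∈ φ.maxGenEigenspace 0 := by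
          rw [Module.End.mem_maxGenEigenspace]
          exact ⟨1, by simpa using hφw⟩
        have hdisj := φ.disjoint_genEigenspace (Ne.symm hμ) ⊤ ⊤
        have : w ∈ φ.maxGenEigenspace 0 ⊓ W := ⟨hw0, hw⟩
        have hwz : w = 0 := by
          have := hdisj.eq_bot ▸ this
          simpa [Module.End.maxGenEigenspace, Module.End.genEigenspace_top] using
            (Submodule.mem_bot ℂ).mp (by
              have h2 : φ.genEigenspace 0 ⊤ ⊓ φ.genEigenspace μ ⊤ = ⊥ := hdisj.eq_bot
              have h3 : w ∈ φ.genEigenspace 0 ⊤ ⊓ φ.genEigenspace μ ⊤ := ⟨hw0, hw⟩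
              rwa [h2] at h3)
        simp [hwz]
      have hsψ : Function.Surjective ψ := (LinearMap.injective_iff_surjective).mp hinj
      have hsurj : Function.Surjective (ψ ^ n) := by
        intro w
        obtain ⟨z, hz⟩ := hsψ.iterate n w
        exact ⟨z, by rwa [Module.End.pow_apply]⟩
      obtain ⟨z, hz⟩ := hsurj ⟨y, hyμ⟩
      have hzval : (φ ^ n) (z : V) = y := by
        have := congrArg Subtype.val hz
        refine Eq.trans ?_ this
        rw [hψ, Module.End.pow_restrict (f' := φ) n (fun x hx => hmaps hx)]
        rfl
      rw [← hzval, skew_pow_aux B φ hskew n x (z : V)]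
      have hxker : (φ ^ n) (x : V) = 0 := x.2
      rw [hxker]
      simp
  | zero => simp
  | add y z _ _ hy hz => rw [map_add, hy, hz, add_zero]
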